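/- For every positive integer m, lim_{k→∞} 2^{k+1}·(1 − c_k^m) = m·π. -/

import Mathlib

open Real Filter Topology

private lemma tan_add_aux (x y : ℝ) (hx : Real.cos x ≠ 0) (hy : Real.cos y ≠ 0)
    (hxy : Real.cos (x + y) ≠ 0) :
    (Real.tan x + Real.tan y) / (1 - Real.tan x * Real.tan y) = Real.tan (x + y) := by
  have hden : 1 - Real.tan x * Real.tan y = Real.cos (x + y) / (Real.cos x * Real.cos y) := by
    rw [Real.tan_eq_sin_div_cos, Real.tan_eq_sin_div_cos, Real.cos_add]
    field_simp
  rw [hden, Real.tan_eq_sin_div_cos, Real.tan_eq_sin_div_cos, Real.tan_eq_sin_div_cos,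
    Real.sin_add]
  field_simp

private lemma tan_pi_div_four_sub_aux (y : ℝ) (hy : Real.cos y ≠ 0)
    (h2 : Real.cos (π / 4 - y) ≠ 0) :
    Real.tan (π / 4 - y) = (1 - Real.tan y) / (1 + Real.tan y) := by
  have h4 : Real.cos (π / 4 - y) = Real.sqrt 2 / 2 * (Real.cos y + Real.sin y) := by
    rw [Real.cos_sub, Real.cos_pi_div_four, Real.sin_pi_div_four]; ring
  have h5 : Real.sin (π / 4 - y) = Real.sqrt 2 / 2 * (Real.cos y - Real.sin y) := by
    rw [Real.sin_sub, Real.cos_pi_div_four, Real.sin_pi_div_four]; ring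
  have h3 : Real.cos y + Real.sin y ≠ 0 := by
    intro h; apply h2; rw [h4, h]; ring
  have hs2 : Real.sqrt 2 ≠ 0 := by positivity
  have htn : (1 : ℝ) + Real.tan y = (Real.cos y + Real.sin y) / Real.cos y := by
    rw [Real.tan_eq_sin_div_cos]; field_simp
  have htm : (1 : ℝ) - Real.tan y = (Real.cos y - Real.sin y) / Real.cos y := by
    rw [Real.tan_eq_sin_div_cos]; field_simp
  rw [Real.tan_eq_sin_div_cos, h4, h5, htn, htm]
  field_simp

theorem two_pow_mul_error_pow_tendsto_m_pi (a : ℕ → ℝ)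
    (ha1 : a 1 = Real.sqrt 2)
    (ha : ∀ k ≥ 1, a (k + 1) = Real.sqrt (2 + a k))
    (b : ℕ → ℝ)
    (hb : ∀ k ≥ 1, b k = Real.sqrt (2 - a k) / a (k + 1))
    (c : ℕ → ℝ)
    (hc1 : c 1 = b 1)
    (hc : ∀ k ≥ 1, c (k + 1) = (c k + b (k + 1)) / (1 - c k * b (k + 1))) :
    ∀ m : ℕ, 1 ≤ m →
      Tendsto (fun k : ℕ => 2 ^ (k + 1) * (1 - c k ^ m)) atTop (𝓝 (m * π)) := by
  -- basic numeric facts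
  have hpow8 : ∀ n : ℕ, 3 ≤ n → (8 : ℝ) ≤ 2 ^ n := by
    intro n hn
    calc (8 : ℝ) = 2 ^ 3 := by norm_num
    _ ≤ 2 ^ n := pow_le_pow_right₀ (by norm_num) hn
  have hθpos : ∀ n : ℕ, 0 < π / 2 ^ n := fun n => by positivity
  have hθsmall : ∀ n : ℕ, 3 ≤ n → π / 2 ^ n ≤ π / 8 := by
    intro n hn
    exact div_le_div_of_nonneg_left pi_pos.le (by norm_num) (hpow8 n hn)
  have hhalf : ∀ n : ℕ, 3 ≤ n → π / 2 ^ n < π / 2 := fun n hn => by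
    have := hθsmall n hn; linarith [pi_pos]
  have hcospos : ∀ x : ℝ, -(π/2) < x → x < π/2 → 0 < Real.cos x := fun x h1 h2 =>
    Real.cos_pos_of_mem_Ioo ⟨h1, h2⟩
  -- the closed form for a
  have hA : ∀ k, 1 ≤ k → a k = 2 * Real.cos (π / 2 ^ (k + 1)) := by
    intro k hk
    induction k, hk using Nat.le_induction with
    | base =>
      rw [ha1, show ((2:ℝ) ^ (1+1)) = 4 by norm_num, Real.cos_pi_div_four]
      rw [mul_div_cancel₀]; norm_num
    | succ k hk ih =>
      rw [ha k hk, ih]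
      have h2θ : π / 2 ^ (k + 1) = 2 * (π / 2 ^ (k + 2)) := by
        rw [show ((2:ℝ) ^ (k+2)) = 2 ^ (k+1) * 2 by ring]
        field_simp
      have hcp : 0 < Real.cos (π / 2 ^ (k + 2)) := by
        apply hcospos
        · have := hθpos (k+2); linarith [pi_pos]
        · exact hhalf (k+2) (by omega)
      rw [h2θ, Real.cos_two_mul,
        show (2:ℝ) + 2 * (2 * Real.cos (π / 2 ^ (k+2)) ^ 2 - 1)
          = (2 * Real.cos (π / 2 ^ (k+2))) ^ 2 by ring,
        Real.sqrt_sq (by positivity)]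
  -- the closed form for b
  have hB : ∀ k, 1 ≤ k → b k = Real.tan (π / 2 ^ (k + 2)) := by
    intro k hk
    have h2θ : π / 2 ^ (k + 1) = 2 * (π / 2 ^ (k + 2)) := by
      rw [show ((2:ℝ) ^ (k+2)) = 2 ^ (k+1) * 2 by ring]
      field_simp
    have hsn : 0 ≤ Real.sin (π / 2 ^ (k + 2)) := by
      apply Real.sin_nonneg_of_nonneg_of_le_pi (hθpos (k+2)).le
      have := hhalf (k+2) (by omega); linarith [pi_pos]
    have hcp : 0 < Real.cos (π / 2 ^ (k + 2)) := by
      apply hcospos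
      · have := hθpos (k+2); linarith [pi_pos]
      · exact hhalf (k+2) (by omega)
    rw [hb k hk, hA k hk, hA (k+1) (by omega), h2θ]
    rw [show (2:ℝ) - 2 * Real.cos (2 * (π / 2 ^ (k+2)))
        = (2 * Real.sin (π / 2 ^ (k+2))) ^ 2 from by
      rw [Real.cos_two_mul]
      linear_combination (-4 : ℝ) * Real.sin_sq_add_cos_sq (π / 2 ^ (k+2)),
      Real.sqrt_sq (by positivity), show k + 1 + 1 = k + 2 from rfl,
      Real.tan_eq_sin_div_cos, mul_div_mul_left _ _ (two_ne_zero)]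
  -- the closed form for c
  have hC : ∀ k, 1 ≤ k → c k = Real.tan (π / 4 - π / 2 ^ (k + 2)) := by
    intro k hk
    induction k, hk using Nat.le_induction with
    | base =>
      rw [hc1, hB 1 le_rfl]
      congr 1
      rw [show ((2:ℝ) ^ (1+2)) = 8 by norm_num]; ring
    | succ k hk ih =>
      have h23 : (2:ℝ) ^ (k + 3) = 2 ^ (k + 2) * 2 := by ring
      have hy1 : 0 < π / 2 ^ (k + 3) := hθpos _
      have hy2 : π / 2 ^ (k + 3) ≤ π / 8 := hθsmall _ (by omega)
      have hx1 : 0 < π / 4 - π / 2 ^ (k + 2) := by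
        have := hθsmall (k+2) (by omega); linarith [pi_pos]
      have hx2 : π / 4 - π / 2 ^ (k + 2) < π / 2 := by
        have := hθpos (k+2); linarith [pi_pos]
      have hsum : π / 4 - π / 2 ^ (k + 2) + π / 2 ^ (k + 3) = π / 4 - π / 2 ^ (k + 3) := by
        rw [h23]; field_simp; ring
      have hcx : Real.cos (π / 4 - π / 2 ^ (k + 2)) ≠ 0 :=
        (hcospos _ (by linarith [pi_pos]) hx2).ne'
      have hcy : Real.cos (π / 2 ^ (k + 3)) ≠ 0 :=
        (hcospos _ (by linarith [pi_pos]) (hhalf _ (by omega))).ne'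
      have hcxy : Real.cos (π / 4 - π / 2 ^ (k + 2) + π / 2 ^ (k + 3)) ≠ 0 := by
        rw [hsum]
        refine (hcospos _ ?_ ?_).ne'
        · have := hθsmall (k+3) (by omega); linarith [pi_pos]
        · have := hθpos (k+3); linarith [pi_pos]
      rw [hc k hk, ih, hB (k+1) (by omega), show k + 1 + 2 = k + 3 from rfl,
        tan_add_aux _ _ hcx hcy hcxy, hsum]
  -- limit machinery
  set ε : ℕ → ℝ := fun k => π / 2 ^ (k + 2) with hεdef
  have hεpos : ∀ k, 0 < ε k := fun k => hθpos _
  have hεne : ∀ k, ε k ≠ 0 := fun k => (hεpos k).ne'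
  have h2top : Tendsto (fun k : ℕ => (2:ℝ) ^ (k + 2)) atTop atTop :=
    (tendsto_pow_atTop_atTop_of_one_lt (by norm_num : (1:ℝ) < 2)).comp
      (tendsto_add_atTop_nat 2)
  have hε0 : Tendsto ε atTop (𝓝 0) := Tendsto.div_atTop tendsto_const_nhds h2top
  have hεmem : Tendsto ε atTop (𝓝[≠] 0) :=
    tendsto_nhdsWithin_of_tendsto_nhds_of_eventually_within _ hε0
      (Eventually.of_forall fun k => hεne k)
  have hd : HasDerivAt Real.tan 1 0 := by
    have := Real.hasDerivAt_tan (by simp : Real.cos 0 ≠ 0)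
    simpa using this
  have htandiv : Tendsto (fun k => Real.tan (ε k) / ε k) atTop (𝓝 1) := by
    have hs := hasDerivAt_iff_tendsto_slope.mp hd
    have := hs.comp hεmem
    refine this.congr fun k => ?_
    simp [slope_fun_def, Real.tan_zero, Function.comp, div_eq_inv_mul]
  have htan0 : Tendsto (fun k => Real.tan (ε k)) atTop (𝓝 0) := by
    have hct : ContinuousAt Real.tan 0 := Real.continuousAt_tan.mpr (by simp)
    have := hct.tendsto.comp hε0
    simpa [Function.comp_def] using this
  have hinv : Tendsto (fun k => 1 / (1 + Real.tan (ε k))) atTop (𝓝 1) := by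
    have h1 : Tendsto (fun k => (1:ℝ) + Real.tan (ε k)) atTop (𝓝 1) := by
      simpa using tendsto_const_nhds.add htan0
    have := Tendsto.div (tendsto_const_nhds : Tendsto (fun _ : ℕ => (1:ℝ)) atTop (𝓝 1)) h1
      (by norm_num)
    simpa [Pi.div_def] using this
  have hg : Tendsto (fun k => π * (Real.tan (ε k) / ε k) * (1 / (1 + Real.tan (ε k))))
      atTop (𝓝 π) := by
    have := ((tendsto_const_nhds : Tendsto (fun _ : ℕ => π) atTop (𝓝 π)).mul htandiv).mul hinv
    simpa using this
  have hmain : Tendsto (fun k : ℕ => (2:ℝ) ^ (k + 1) * (1 - c k)) atTop (𝓝 π) := by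
    refine hg.congr' ?_
    filter_upwards [eventually_ge_atTop 1] with k hk
    have htpos : 0 < Real.tan (ε k) := by
      apply Real.tan_pos_of_pos_of_lt_pi_div_two (hεpos k)
      exact hhalf (k+2) (by omega)
    have h1t : (1:ℝ) + Real.tan (ε k) ≠ 0 := by linarith
    have hcy : Real.cos (ε k) ≠ 0 := by
      refine (hcospos _ ?_ (hhalf (k+2) (by omega))).ne'
      have := hεpos k; linarith [pi_pos]
    have hcx : Real.cos (π / 4 - ε k) ≠ 0 := by
      refine (hcospos _ ?_ ?_).ne'
      · have := hθsmall (k+2) (by omega); linarith [pi_pos]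
      · have := hεpos k; linarith [pi_pos]
    have hckf : c k = (1 - Real.tan (ε k)) / (1 + Real.tan (ε k)) := by
      rw [hC k hk]
      exact tan_pi_div_four_sub_aux _ hcy hcx
    have hπ : π = ε k * 2 ^ (k + 2) := by
      rw [hεdef]; field_simp
    rw [hckf, hπ, show ((2:ℝ) ^ (k+2)) = 2 ^ (k+1) * 2 by ring]
    field_simp
    ring
    rw [mul_right_comm (ε k), mul_inv_cancel₀ (hεne k), one_mul]
  intro m hm
  have hc1lim : Tendsto c atTop (𝓝 1) := by
    have hct : ContinuousAt Real.tan (π/4) :=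
      Real.continuousAt_tan.mpr (by rw [Real.cos_pi_div_four]; positivity)
    have harg : Tendsto (fun k => π / 4 - ε k) atTop (𝓝 (π/4)) := by
      have := (tendsto_const_nhds : Tendsto (fun _ : ℕ => π/4) atTop (𝓝 (π/4))).sub hε0
      simpa using this
    have := hct.tendsto.comp harg
    rw [Real.tan_pi_div_four] at this
    refine this.congr' ?_
    filter_upwards [eventually_ge_atTop 1] with k hk
    exact (hC k hk).symm
  have hsum : Tendsto (fun k => ∑ i ∈ Finset.range m, c k ^ i) atTop (𝓝 (m : ℝ)) := by
    have : Tendsto (fun k => ∑ i ∈ Finset.range m, c k ^ i) atTop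
        (𝓝 (∑ i ∈ Finset.range m, (1:ℝ) ^ i)) :=
      tendsto_finset_sum _ (fun i _ => hc1lim.pow i)
    simpa using this
  have key : ∀ k : ℕ, (2:ℝ) ^ (k + 1) * (1 - c k ^ m)
      = ((2:ℝ) ^ (k + 1) * (1 - c k)) * ∑ i ∈ Finset.range m, c k ^ i := by
    intro k
    have h := geom_sum_mul (c k) m
    linear_combination ((2:ℝ) ^ (k + 1)) * h
  have := hmain.mul hsum
  rw [show (m : ℝ) * π = π * m by ring]
  exact this.congr fun k => (key k).symm
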